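/- Let n ∈ ℕ, 1 ≤ q < ∞ and ε₁,…,ε_n ≥ 0. If 1 − Σ_{k=1}^{n} ε_k^q/t_k^q ≥ 0 set m = n; otherwise choose m ∈ {0,1,…,n} such that 1 − Σ_{k=1}^{m} ε_k^q/t_k^q ≥ 0 and 1 − Σ_{k=1}^{m+1} ε_k^q/t_k^q < 0. Then E(W^T_q, I^n_{ε̄}) = E(W^T_q, I^n_{ε̄}, Φ*_m) = ( t_{m+1}^q + Σ_{k=1}^{m} (1 − t_{m+1}^q/t_k^q) ε_k^q )^{1/q}. -/

import Mathlib

open scoped ENNReal NNReal BigOperators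

/-- The `ℓ_q` (quasi-)norm `(∑ |x_k|^q)^{1/q}` of a complex sequence, valued in `ℝ≥0∞`. -/
noncomputable def lqNorm (q : ℝ) (x : ℕ → ℂ) : ℝ≥0∞ :=
  (∑' k, (‖x k‖₊ : ℝ≥0∞) ^ q) ^ (1 / q)

/-- The class `W^T_q = {Th : h ∈ ℓ_q, ‖h‖_q ≤ 1}`, where `T` is the diagonal operator
determined by the sequence `t` (0-based indexing: `t k` is the paper's `t_{k+1}`). -/
def WT (q : ℝ) (t : ℕ → ℝ) : Set (ℕ → ℂ) :=
  {x | ∃ h : ℕ → ℂ, (∀ k, x k = (t k : ℂ) * h k) ∧ lqNorm q h ≤ 1}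

/-- The error `E(W, I, Φ) = sup_{x ∈ W} sup_{a ∈ I x} ‖x - Φ a‖_q` of a recovery
method `Φ`, measured in `ℓ_q`. -/
noncomputable def recErr {Z : Type*} (q : ℝ) (W : Set (ℕ → ℂ))
    (I : (ℕ → ℂ) → Set Z) (Φ : Z → ℕ → ℂ) : ℝ≥0∞ :=
  ⨆ x ∈ W, ⨆ a ∈ I x, lqNorm q (fun k => x k - Φ a k)

/-- The error of optimal recovery `E(W, I) = inf_Φ E(W, I, Φ)`. -/
noncomputable def optErr {Z : Type*} (q : ℝ) (W : Set (ℕ → ℂ))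
    (I : (ℕ → ℂ) → Set Z) : ℝ≥0∞ :=
  ⨅ Φ : Z → ℕ → ℂ, recErr q W I Φ

/-- The method `Φ*_m(a) = (a_1(1 − t_{m+1}^q/t_1^q), …, a_m(1 − t_{m+1}^q/t_m^q), 0, …)`
for information consisting of the first `n` coordinates (0-based: `t m` is the paper's
`t_{m+1}`); `PhiStar q t n 0` is the zero method `Φ*_0`. -/
noncomputable def PhiStar (q : ℝ) (t : ℕ → ℝ) (n m : ℕ) (a : Fin n → ℂ) : ℕ → ℂ :=
  fun k => if h : k < n ∧ k < m then ((1 - t m ^ q / t k ^ q : ℝ) : ℂ) * a ⟨k, h.1⟩ else 0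

/-- The information mapping `I^n_{ε̄}(x) = {a ∈ ℂⁿ : |x_k − a_k| ≤ ε_k, k = 1,…,n}`. -/
def infoCoord (n : ℕ) (ε : ℕ → ℝ) (x : ℕ → ℂ) : Set (Fin n → ℂ) :=
  {a | ∀ k : Fin n, ‖x (k : ℕ) - a k‖ ≤ ε (k : ℕ)}

lemma coe_nnnorm_rpow {q : ℝ} (hq : 0 ≤ q) (z : ℂ) :
    (‖z‖₊ : ℝ≥0∞) ^ q = ENNReal.ofReal (‖z‖ ^ q) := by
  rw [← enorm_eq_nnnorm, ← ofReal_norm, ENNReal.ofReal_rpow_of_nonneg (norm_nonneg z) hq]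

lemma norm_real_coe {r : ℝ} (hr : 0 ≤ r) : ‖((r:ℝ):ℂ)‖ = r := by
  rw [Complex.norm_real, Real.norm_eq_abs, abs_of_nonneg hr]

lemma upper_bound (n : ℕ) (q : ℝ) (hq : 1 ≤ q)
    (t : ℕ → ℝ) (htpos : ∀ k, 0 < t k) (htmono : Antitone t)
    (ε : ℕ → ℝ) (hε : ∀ k, k < n → 0 ≤ ε k) (m : ℕ) (hmn : m ≤ n) :
    recErr q (WT q t) (infoCoord n ε) (PhiStar q t n m) ≤
      ENNReal.ofReal
        ((t m ^ q + ∑ k ∈ Finset.range m, (1 - t m ^ q / t k ^ q) * ε k ^ q) ^ (1 / q)) := by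
  have hq0 : 0 < q := lt_of_lt_of_le one_pos hq
  set inr := t m ^ q + ∑ k ∈ Finset.range m, (1 - t m ^ q / t k ^ q) * ε k ^ q with hinr
  have hlam1 : ∀ k < m, t m ^ q / t k ^ q ≤ 1 := by
    intro k hk
    rw [div_le_one (Real.rpow_pos_of_pos (htpos k) q)]
    exact Real.rpow_le_rpow (htpos m).le (htmono hk.le) hq0.le
  have hcnn : ∀ k < m, 0 ≤ (1 - t m ^ q / t k ^ q) * ε k ^ q := by
    intro k hk
    have := hlam1 k hk
    have hεk : 0 ≤ ε k := hε k (hk.trans_le hmn)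
    have : 0 ≤ 1 - t m ^ q / t k ^ q := by linarith
    positivity
  have hinr0 : 0 ≤ inr := by
    rw [hinr]
    have : 0 ≤ t m ^ q := (Real.rpow_pos_of_pos (htpos m) q).le
    have hs : 0 ≤ ∑ k ∈ Finset.range m, (1 - t m ^ q / t k ^ q) * ε k ^ q :=
      Finset.sum_nonneg fun k hk => hcnn k (Finset.mem_range.1 hk)
    linarith
  refine iSup₂_le fun x hx => iSup₂_le fun a ha => ?_
  obtain ⟨h, hxh, hhn⟩ := hx
  -- the pointwise cost bound
  set c : ℕ → ℝ := fun k => if k < m then (1 - t m ^ q / t k ^ q) * ε k ^ q else 0 with hc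
  have hcnn' : ∀ k, 0 ≤ c k := by
    intro k; by_cases hk : k < m
    · simpa [hc, hk] using hcnn k hk
    · simp [hc, hk]
  have pointwise : ∀ k, (‖x k - PhiStar q t n m a k‖₊ : ℝ≥0∞) ^ q ≤
      ENNReal.ofReal (t m ^ q * ‖h k‖ ^ q + c k) := by
    intro k
    rw [coe_nnnorm_rpow hq0.le]
    apply ENNReal.ofReal_le_ofReal
    have htkq : 0 < t k ^ q := Real.rpow_pos_of_pos (htpos k) q
    by_cases hk : k < m
    · have hkn : k < n := hk.trans_le hmn
      have hphi : PhiStar q t n m a k = ((1 - t m ^ q / t k ^ q : ℝ) : ℂ) * a ⟨k, hkn⟩ := by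
        simp [PhiStar, hkn, hk]
      rw [hphi]
      set lam := t m ^ q / t k ^ q with hlamdef
      have hlam0 : 0 ≤ lam := div_nonneg (Real.rpow_nonneg (htpos m).le q) (Real.rpow_nonneg (htpos k).le q)
      have hlam1' : lam ≤ 1 := hlam1 k hk
      have hεk : 0 ≤ ε k := hε k hkn
      have hek : ‖x k - a ⟨k, hkn⟩‖ ≤ ε k := ha ⟨k, hkn⟩
      have hxknorm : ‖x k‖ = t k * ‖h k‖ := by
        rw [hxh k, norm_mul, Complex.norm_real, Real.norm_eq_abs, abs_of_pos (htpos k)]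
      have hdecomp : x k - ((1 - lam : ℝ) : ℂ) * a ⟨k, hkn⟩
          = ((lam : ℝ) : ℂ) * x k + ((1 - lam : ℝ) : ℂ) * (x k - a ⟨k, hkn⟩) := by
        push_cast; ring
      have hn1 : ‖x k - ((1 - lam : ℝ) : ℂ) * a ⟨k, hkn⟩‖ ≤
          lam * (t k * ‖h k‖) + (1 - lam) * ε k := by
        rw [hdecomp]
        refine (norm_add_le _ _).trans ?_
        rw [norm_mul, norm_mul, norm_real_coe hlam0, norm_real_coe (by linarith), hxknorm]
        have h2 : (1 - lam) * ‖x k - a ⟨k, hkn⟩‖ ≤ (1 - lam) * ε k :=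
          mul_le_mul_of_nonneg_left hek (by linarith)
        linarith
      have key := (convexOn_rpow hq).2 (Set.mem_Ici.2 (mul_nonneg (htpos k).le (norm_nonneg (h k))))
        (Set.mem_Ici.2 hεk) hlam0 (by linarith : (0:ℝ) ≤ 1 - lam) (by ring)
      simp only [smul_eq_mul] at key
      have hcval : c k = (1 - lam) * ε k ^ q := by simp [hc, hk, hlamdef]
      calc ‖x k - ((1 - lam : ℝ) : ℂ) * a ⟨k, hkn⟩‖ ^ q
          ≤ (lam * (t k * ‖h k‖) + (1 - lam) * ε k) ^ q :=
            Real.rpow_le_rpow (norm_nonneg _) hn1 hq0.le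
        _ ≤ lam * (t k * ‖h k‖) ^ q + (1 - lam) * ε k ^ q := key
        _ = t m ^ q * ‖h k‖ ^ q + c k := by
            rw [hcval, Real.mul_rpow (htpos k).le (norm_nonneg _), ← mul_assoc,
              div_mul_cancel₀ _ htkq.ne']
    · have hphi : PhiStar q t n m a k = 0 := by simp [PhiStar, hk]
      rw [hphi, sub_zero, hxh k]
      have hcval : c k = 0 := by simp [hc, hk]
      rw [hcval, add_zero, norm_mul, Complex.norm_real, Real.norm_eq_abs,
        abs_of_pos (htpos k), Real.mul_rpow (htpos k).le (norm_nonneg _)]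
      have htk : t k ^ q ≤ t m ^ q :=
        Real.rpow_le_rpow (htpos k).le (htmono (le_of_not_gt hk)) hq0.le
      exact mul_le_mul_of_nonneg_right htk (Real.rpow_nonneg (norm_nonneg _) q)
  have hhsum : ∑' k, (‖h k‖₊ : ℝ≥0∞) ^ q ≤ 1 := by
    have h1 := ENNReal.rpow_le_rpow hhn hq0.le
    rwa [lqNorm, ← ENNReal.rpow_mul, one_div, inv_mul_cancel₀ hq0.ne', ENNReal.rpow_one,
      ENNReal.one_rpow] at h1
  have hsum : ∑' k, (‖x k - PhiStar q t n m a k‖₊ : ℝ≥0∞) ^ q ≤ ENNReal.ofReal inr := by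
    calc ∑' k, (‖x k - PhiStar q t n m a k‖₊ : ℝ≥0∞) ^ q
        ≤ ∑' k, ENNReal.ofReal (t m ^ q * ‖h k‖ ^ q + c k) := ENNReal.tsum_le_tsum pointwise
      _ = ∑' k, (ENNReal.ofReal (t m ^ q) * (‖h k‖₊ : ℝ≥0∞) ^ q + ENNReal.ofReal (c k)) := by
          refine tsum_congr fun k => ?_
          rw [ENNReal.ofReal_add (mul_nonneg (Real.rpow_nonneg (htpos m).le q) (Real.rpow_nonneg (norm_nonneg _) q)) (hcnn' k), ENNReal.ofReal_mul
            (Real.rpow_pos_of_pos (htpos m) q).le, coe_nnnorm_rpow hq0.le]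
      _ = ENNReal.ofReal (t m ^ q) * ∑' k, (‖h k‖₊ : ℝ≥0∞) ^ q + ∑' k, ENNReal.ofReal (c k) := by
          rw [ENNReal.tsum_add, ENNReal.tsum_mul_left]
      _ ≤ ENNReal.ofReal (t m ^ q) * 1 +
            ENNReal.ofReal (∑ k ∈ Finset.range m, (1 - t m ^ q / t k ^ q) * ε k ^ q) := by
          refine add_le_add (mul_le_mul_right hhsum _) (le_of_eq ?_)
          have h1 : ∑' k, ENNReal.ofReal (c k) = ∑ k ∈ Finset.range m, ENNReal.ofReal (c k) :=
            tsum_eq_sum (fun k hk => by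
              have hk' : ¬ k < m := fun h => hk (Finset.mem_range.2 h)
              simp [hc, hk'])
          rw [h1, ← ENNReal.ofReal_sum_of_nonneg (fun k _ => hcnn' k)]
          congr 1
          exact Finset.sum_congr rfl fun k hk => by simp [hc, Finset.mem_range.1 hk]
      _ = ENNReal.ofReal inr := by
          rw [mul_one, ← ENNReal.ofReal_add (Real.rpow_pos_of_pos (htpos m) q).le
            (Finset.sum_nonneg fun k hk => hcnn k (Finset.mem_range.1 hk)), hinr]
  calc lqNorm q (fun k => x k - PhiStar q t n m a k)
      = (∑' k, (‖x k - PhiStar q t n m a k‖₊ : ℝ≥0∞) ^ q) ^ (1/q) := rfl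
    _ ≤ ENNReal.ofReal inr ^ (1/q) := ENNReal.rpow_le_rpow hsum (by positivity)
    _ = ENNReal.ofReal (inr ^ (1/q)) := ENNReal.ofReal_rpow_of_nonneg hinr0 (by positivity)

lemma lp_tsum_add_le {p : ℝ} (hp : 1 ≤ p) (f g : ℕ → ℝ≥0∞) :
    (∑' k, (f k + g k) ^ p) ^ (1/p) ≤ (∑' k, f k ^ p) ^ (1/p) + (∑' k, g k ^ p) ^ (1/p) := by
  have hp0 : 0 < p := lt_of_lt_of_le one_pos hp
  set A := (∑' k, f k ^ p) ^ (1/p) with hA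
  set B := (∑' k, g k ^ p) ^ (1/p) with hB
  have key : ∑' k, (f k + g k) ^ p ≤ (A + B) ^ p := by
    rw [ENNReal.tsum_eq_iSup_sum]
    refine iSup_le fun s => ?_
    have h1 : (∑ k ∈ s, (f k + g k) ^ p) ^ (1/p) ≤ A + B := by
      refine le_trans (ENNReal.Lp_add_le s f g hp) ?_
      rw [hA, hB]
      exact add_le_add (ENNReal.rpow_le_rpow (ENNReal.sum_le_tsum s) (by positivity))
        (ENNReal.rpow_le_rpow (ENNReal.sum_le_tsum s) (by positivity))
    calc ∑ k ∈ s, (f k + g k)^p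
        = ((∑ k ∈ s, (f k+g k)^p)^(1/p))^p := by
          rw [← ENNReal.rpow_mul, one_div, inv_mul_cancel₀ hp0.ne', ENNReal.rpow_one]
      _ ≤ (A+B)^p := ENNReal.rpow_le_rpow h1 hp0.le
  calc (∑' k, (f k + g k) ^ p) ^ (1/p) ≤ ((A+B)^p)^(1/p) := ENNReal.rpow_le_rpow key (by positivity)
    _ = A + B := by rw [← ENNReal.rpow_mul, mul_one_div_cancel hp0.ne', ENNReal.rpow_one]

lemma lower_bound (n : ℕ) (q : ℝ) (hq : 1 ≤ q)
    (t : ℕ → ℝ) (htpos : ∀ k, 0 < t k) (ε : ℕ → ℝ) (hε : ∀ k, k < n → 0 ≤ ε k)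
    (m : ℕ) (hmn : m ≤ n)
    (hs : ∑ k ∈ Finset.range m, ε k ^ q / t k ^ q ≤ 1)
    (hnext : m < n → 1 - ∑ k ∈ Finset.range m, ε k ^ q / t k ^ q ≤ ε m ^ q / t m ^ q)
    (Φ : (Fin n → ℂ) → ℕ → ℂ) :
    ENNReal.ofReal
        ((t m ^ q + ∑ k ∈ Finset.range m, (1 - t m ^ q / t k ^ q) * ε k ^ q) ^ (1 / q)) ≤
      recErr q (WT q t) (infoCoord n ε) Φ := by
  have hq0 : 0 < q := lt_of_lt_of_le one_pos hq
  set s0 := 1 - ∑ k ∈ Finset.range m, ε k ^ q / t k ^ q with hs0def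
  have hs0 : 0 ≤ s0 := by rw [hs0def]; linarith
  set xs : ℕ → ℂ := fun k =>
    if k < m then (ε k : ℂ) else if k = m then ((t m * s0 ^ (1/q) : ℝ) : ℂ) else 0 with hxs
  set hh : ℕ → ℂ := fun k =>
    if k < m then ((ε k / t k : ℝ) : ℂ) else if k = m then ((s0 ^ (1/q) : ℝ) : ℂ) else 0 with hhdef
  have hεnn : ∀ k, k < m → 0 ≤ ε k := fun k hk => hε k (hk.trans_le hmn)
  have htmq : 0 < t m ^ q := Real.rpow_pos_of_pos (htpos m) q
  have hinner_id : t m ^ q + ∑ k ∈ Finset.range m, (1 - t m ^ q / t k ^ q) * ε k ^ q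
      = ∑ k ∈ Finset.range m, ε k ^ q + t m ^ q * s0 := by
    rw [hs0def, mul_sub, mul_one, Finset.mul_sum,
      Finset.sum_congr rfl (fun k _ => (by ring :
        (1 - t m ^ q / t k ^ q) * ε k ^ q = ε k ^ q - t m ^ q * (ε k ^ q / t k ^ q))),
      Finset.sum_sub_distrib]
    ring
  have hinner_nn : 0 ≤ ∑ k ∈ Finset.range m, ε k ^ q + t m ^ q * s0 :=
    add_nonneg (Finset.sum_nonneg fun k hk =>
        Real.rpow_nonneg (hεnn k (Finset.mem_range.1 hk)) q)
      (mul_nonneg htmq.le hs0)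
  have hxsm_nn : 0 ≤ t m * s0 ^ (1/q) := mul_nonneg (htpos m).le (Real.rpow_nonneg hs0 _)
  -- tsum for xs
  have hSxs : ∑' k, (‖xs k‖₊ : ℝ≥0∞) ^ q
      = ENNReal.ofReal (∑ k ∈ Finset.range m, ε k ^ q + t m ^ q * s0) := by
    have hz : ∀ k ∉ Finset.range (m+1), (‖xs k‖₊ : ℝ≥0∞) ^ q = 0 := by
      intro k hk
      rw [Finset.mem_range, not_lt] at hk
      have h1 : ¬ k < m := by omega
      have h2 : k ≠ m := by omega
      simp [hxs, h1, h2, ENNReal.zero_rpow_of_pos hq0]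
    rw [tsum_eq_sum hz, Finset.sum_range_succ]
    have hterm : ∀ k ∈ Finset.range m, (‖xs k‖₊ : ℝ≥0∞) ^ q = ENNReal.ofReal (ε k ^ q) := by
      intro k hk
      have hk' := Finset.mem_range.1 hk
      rw [coe_nnnorm_rpow hq0.le]
      congr 1
      have hxk : xs k = ((ε k : ℝ) : ℂ) := by simp [hxs, hk']
      rw [hxk, norm_real_coe (hεnn k hk')]
    have htermm : (‖xs m‖₊ : ℝ≥0∞) ^ q = ENNReal.ofReal (t m ^ q * s0) := by
      rw [coe_nnnorm_rpow hq0.le]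
      congr 1
      have hxm : xs m = ((t m * s0 ^ (1/q) : ℝ) : ℂ) := by simp [hxs]
      rw [hxm, norm_real_coe hxsm_nn,
        Real.mul_rpow (htpos m).le (Real.rpow_nonneg hs0 _),
        ← Real.rpow_mul hs0, one_div_mul_cancel hq0.ne', Real.rpow_one]
    rw [Finset.sum_congr rfl hterm, htermm,
      ← ENNReal.ofReal_sum_of_nonneg (fun k hk =>
        Real.rpow_nonneg (hεnn k (Finset.mem_range.1 hk)) q),
      ← ENNReal.ofReal_add (Finset.sum_nonneg fun k hk =>
        Real.rpow_nonneg (hεnn k (Finset.mem_range.1 hk)) q) (mul_nonneg htmq.le hs0)]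
  have hlqxs : lqNorm q xs = ENNReal.ofReal
      ((t m ^ q + ∑ k ∈ Finset.range m, (1 - t m ^ q / t k ^ q) * ε k ^ q) ^ (1/q)) := by
    rw [lqNorm, hSxs, ENNReal.ofReal_rpow_of_nonneg hinner_nn (by positivity), hinner_id]
  -- membership in WT
  have fact1 : ∀ k, xs k = (t k : ℂ) * hh k := by
    intro k
    by_cases hk : k < m
    · have h1 : xs k = ((ε k : ℝ) : ℂ) := by simp [hxs, hk]
      have h2 : hh k = ((ε k / t k : ℝ) : ℂ) := by simp [hhdef, hk]
      rw [h1, h2]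
      push_cast
      rw [mul_comm, div_mul_cancel₀]
      exact_mod_cast (htpos k).ne'
    · by_cases hk2 : k = m
      · subst hk2
        have h1 : xs k = ((t k * s0 ^ (1/q) : ℝ) : ℂ) := by simp [hxs, hk]
        have h2 : hh k = ((s0 ^ (1/q) : ℝ) : ℂ) := by simp [hhdef, hk]
        rw [h1, h2]; push_cast; ring
      · have h1 : xs k = 0 := by simp [hxs, hk, hk2]
        have h2 : hh k = 0 := by simp [hhdef, hk, hk2]
        rw [h1, h2, mul_zero]
  have fact2 : lqNorm q hh ≤ 1 := by
    have hShh : ∑' k, (‖hh k‖₊ : ℝ≥0∞) ^ q = ENNReal.ofReal 1 := by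
      have hz : ∀ k ∉ Finset.range (m+1), (‖hh k‖₊ : ℝ≥0∞) ^ q = 0 := by
        intro k hk
        rw [Finset.mem_range, not_lt] at hk
        have h1 : ¬ k < m := by omega
        have h2 : k ≠ m := by omega
        simp [hhdef, h1, h2, ENNReal.zero_rpow_of_pos hq0]
      rw [tsum_eq_sum hz, Finset.sum_range_succ]
      have hterm : ∀ k ∈ Finset.range m,
          (‖hh k‖₊ : ℝ≥0∞) ^ q = ENNReal.ofReal (ε k ^ q / t k ^ q) := by
        intro k hk
        have hk' := Finset.mem_range.1 hk
        rw [coe_nnnorm_rpow hq0.le]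
        congr 1
        have h1 : hh k = ((ε k / t k : ℝ) : ℂ) := by simp [hhdef, hk']
        rw [h1, norm_real_coe (div_nonneg (hεnn k hk') (htpos k).le),
          Real.div_rpow (hεnn k hk') (htpos k).le]
      have htermm : (‖hh m‖₊ : ℝ≥0∞) ^ q = ENNReal.ofReal s0 := by
        rw [coe_nnnorm_rpow hq0.le]
        congr 1
        have h1 : hh m = ((s0 ^ (1/q) : ℝ) : ℂ) := by simp [hhdef]
        rw [h1, norm_real_coe (Real.rpow_nonneg hs0 _),
          ← Real.rpow_mul hs0, one_div_mul_cancel hq0.ne', Real.rpow_one]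
      rw [Finset.sum_congr rfl hterm, htermm,
        ← ENNReal.ofReal_sum_of_nonneg (fun k hk =>
          div_nonneg (Real.rpow_nonneg (hεnn k (Finset.mem_range.1 hk)) q)
            (Real.rpow_pos_of_pos (htpos k) q).le),
        ← ENNReal.ofReal_add (Finset.sum_nonneg fun k hk =>
          div_nonneg (Real.rpow_nonneg (hεnn k (Finset.mem_range.1 hk)) q)
            (Real.rpow_pos_of_pos (htpos k) q).le) hs0]
      congr 1
      rw [hs0def]; ring
    rw [lqNorm, hShh, ENNReal.ofReal_one, ENNReal.one_rpow]
  have hxsW : xs ∈ WT q t := ⟨hh, fact1, fact2⟩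
  have hnegW : (fun k => -xs k) ∈ WT q t := by
    refine ⟨fun k => -hh k, fun k => by show -xs k = (t k : ℂ) * -hh k; rw [fact1 k]; ring, ?_⟩
    have heq : lqNorm q (fun k => -hh k) = lqNorm q hh := by
      rw [lqNorm, lqNorm]
      congr 1
      exact tsum_congr fun k => by rw [nnnorm_neg]
    rw [heq]; exact fact2
  -- info membership
  have hinfo : (0 : Fin n → ℂ) ∈ infoCoord n ε xs := by
    intro k
    simp only [Pi.zero_apply, sub_zero]
    by_cases hk : (k : ℕ) < m
    · have h1 : xs (k : ℕ) = ((ε (k : ℕ) : ℝ) : ℂ) := by simp [hxs, hk]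
      rw [h1, norm_real_coe (hεnn _ hk)]
    · by_cases hk2 : (k : ℕ) = m
      · have hmn' : m < n := hk2 ▸ k.isLt
        have hq' := hnext hmn'
        have h1 : xs (k : ℕ) = ((t m * s0 ^ (1/q) : ℝ) : ℂ) := by simp [hxs, hk, hk2]
        rw [h1, norm_real_coe hxsm_nn, hk2]
        have h2 : t m ^ q * s0 ≤ ε m ^ q := by
          rw [mul_comm]
          exact (le_div_iff₀ htmq).1 hq'
        have h3 : (t m ^ q * s0) ^ (1/q) = t m * s0 ^ (1/q) := by
          rw [Real.mul_rpow htmq.le hs0, ← Real.rpow_mul (htpos m).le,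
            mul_one_div_cancel hq0.ne', Real.rpow_one]
        calc t m * s0 ^ (1/q) = (t m ^ q * s0) ^ (1/q) := h3.symm
          _ ≤ (ε m ^ q) ^ (1/q) :=
              Real.rpow_le_rpow (mul_nonneg htmq.le hs0) h2 (by positivity)
          _ = ε m := by
              rw [← Real.rpow_mul (hε m hmn'), mul_one_div_cancel hq0.ne', Real.rpow_one]
      · have h1 : xs (k : ℕ) = 0 := by simp [hxs, hk, hk2]
        rw [h1, norm_zero]
        exact hε _ k.isLt
  have hinfo' : (0 : Fin n → ℂ) ∈ infoCoord n ε (fun k => -xs k) := by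
    intro k
    have := hinfo k
    simp only [Pi.zero_apply, sub_zero] at this ⊢
    rwa [norm_neg]
  set E := recErr q (WT q t) (infoCoord n ε) Φ with hE
  have h1 : lqNorm q (fun k => xs k - Φ 0 k) ≤ E := by
    calc lqNorm q (fun k => xs k - Φ 0 k)
        ≤ ⨆ a ∈ infoCoord n ε xs, lqNorm q (fun k => xs k - Φ a k) :=
          le_biSup (fun a => lqNorm q (fun k => xs k - Φ a k)) hinfo
      _ ≤ E := le_biSup (fun x => ⨆ a ∈ infoCoord n ε x, lqNorm q (fun k => x k - Φ a k)) hxsW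
  have h2 : lqNorm q (fun k => -xs k - Φ 0 k) ≤ E := by
    calc lqNorm q (fun k => -xs k - Φ 0 k)
        ≤ ⨆ a ∈ infoCoord n ε (fun k => -xs k), lqNorm q (fun k => -xs k - Φ a k) :=
          le_biSup (fun a => lqNorm q (fun k => -xs k - Φ a k)) hinfo'
      _ ≤ E := le_biSup (fun x => ⨆ a ∈ infoCoord n ε x, lqNorm q (fun k => x k - Φ a k)) hnegW
  -- Minkowski
  have hMink : lqNorm q (fun k => (xs k - Φ 0 k) + (xs k + Φ 0 k)) ≤
      lqNorm q (fun k => xs k - Φ 0 k) + lqNorm q (fun k => xs k + Φ 0 k) := by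
    calc lqNorm q (fun k => (xs k - Φ 0 k) + (xs k + Φ 0 k))
        ≤ (∑' k, ((‖xs k - Φ 0 k‖₊ : ℝ≥0∞) + (‖xs k + Φ 0 k‖₊ : ℝ≥0∞)) ^ q) ^ (1/q) := by
          rw [lqNorm]
          refine ENNReal.rpow_le_rpow (ENNReal.tsum_le_tsum fun k => ?_) (by positivity)
          refine ENNReal.rpow_le_rpow ?_ hq0.le
          exact_mod_cast nnnorm_add_le _ _
      _ ≤ _ := lp_tsum_add_le hq _ _
  have h2xs : (fun k => (xs k - Φ 0 k) + (xs k + Φ 0 k)) = fun k => (2:ℂ) * xs k := by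
    funext k; ring
  have hdouble : lqNorm q (fun k => (2:ℂ) * xs k) = 2 * lqNorm q xs := by
    rw [lqNorm, lqNorm]
    have hpt : ∀ k, (‖(2:ℂ) * xs k‖₊ : ℝ≥0∞) ^ q
        = ENNReal.ofReal ((2:ℝ) ^ q) * (‖xs k‖₊ : ℝ≥0∞) ^ q := by
      intro k
      rw [coe_nnnorm_rpow hq0.le, coe_nnnorm_rpow hq0.le, norm_mul]
      have h2 : ‖(2:ℂ)‖ = 2 := by simp
      rw [h2, Real.mul_rpow (by norm_num) (norm_nonneg _),
        ENNReal.ofReal_mul (Real.rpow_nonneg (by norm_num) q)]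
    rw [tsum_congr hpt, ENNReal.tsum_mul_left,
      ENNReal.mul_rpow_of_nonneg _ _ (by positivity),
      ENNReal.ofReal_rpow_of_nonneg (Real.rpow_nonneg (by norm_num) q) (by positivity),
      ← Real.rpow_mul (by norm_num : (0:ℝ) ≤ 2), mul_one_div_cancel hq0.ne', Real.rpow_one]
    norm_num
  have hneg : lqNorm q (fun k => xs k + Φ 0 k) = lqNorm q (fun k => -xs k - Φ 0 k) := by
    rw [lqNorm, lqNorm]
    congr 1
    exact tsum_congr fun k => by
      rw [show -xs k - Φ 0 k = -(xs k + Φ 0 k) by ring, nnnorm_neg]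
  have hchain : 2 * lqNorm q xs ≤ 2 * E := by
    calc 2 * lqNorm q xs = lqNorm q (fun k => (xs k - Φ 0 k) + (xs k + Φ 0 k)) := by
          rw [h2xs, hdouble]
      _ ≤ lqNorm q (fun k => xs k - Φ 0 k) + lqNorm q (fun k => xs k + Φ 0 k) := hMink
      _ ≤ E + E := add_le_add h1 (by rw [hneg]; exact h2)
      _ = 2 * E := (two_mul E).symm
  have hfin : lqNorm q xs ≤ E :=
    (ENNReal.mul_le_mul_iff_right (by norm_num) (by norm_num)).1 hchain
  rw [← hlqxs]
  exact hfin

lemma main_combined (n : ℕ) (q : ℝ) (hq : 1 ≤ q)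
    (t : ℕ → ℝ) (htpos : ∀ k, 0 < t k) (htmono : Antitone t)
    (ε : ℕ → ℝ) (hε : ∀ k, k < n → 0 ≤ ε k) (m : ℕ) (hmn : m ≤ n)
    (hs : ∑ k ∈ Finset.range m, ε k ^ q / t k ^ q ≤ 1)
    (hnext : m < n → 1 - ∑ k ∈ Finset.range m, ε k ^ q / t k ^ q ≤ ε m ^ q / t m ^ q) :
    optErr q (WT q t) (infoCoord n ε) =
      recErr q (WT q t) (infoCoord n ε) (PhiStar q t n m) ∧
    recErr q (WT q t) (infoCoord n ε) (PhiStar q t n m) =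
      ENNReal.ofReal
        ((t m ^ q + ∑ k ∈ Finset.range m, (1 - t m ^ q / t k ^ q) * ε k ^ q) ^ (1 / q)) := by
  have hub := upper_bound n q hq t htpos htmono ε hε m hmn
  have hlb := fun Φ => lower_bound n q hq t htpos ε hε m hmn hs hnext Φ
  have hopt_le : optErr q (WT q t) (infoCoord n ε) ≤
      recErr q (WT q t) (infoCoord n ε) (PhiStar q t n m) := iInf_le _ _
  have hR_le : ENNReal.ofReal
      ((t m ^ q + ∑ k ∈ Finset.range m, (1 - t m ^ q / t k ^ q) * ε k ^ q) ^ (1 / q)) ≤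
      optErr q (WT q t) (infoCoord n ε) := le_iInf hlb
  exact ⟨le_antisymm hopt_le (hub.trans hR_le), le_antisymm hub (hR_le.trans hopt_le)⟩


/-- Theorem 1: optimal recovery of `W^T_q` from the first `n` coordinates
known with coordinatewise errors `ε_k`. -/
theorem optimal_recovery_coordinatewise_error
    (n : ℕ) (hn : 1 ≤ n) (q : ℝ) (hq : 1 ≤ q)
    (t : ℕ → ℝ) (htpos : ∀ k, 0 < t k) (htmono : Antitone t)
    (ε : ℕ → ℝ) (hε : ∀ k, k < n → 0 ≤ ε k) (m : ℕ)
    (hm : (1 - ∑ k ∈ Finset.range n, ε k ^ q / t k ^ q ≥ 0 ∧ m = n) ∨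
      (m ≤ n ∧ 1 - ∑ k ∈ Finset.range m, ε k ^ q / t k ^ q ≥ 0 ∧
        1 - ∑ k ∈ Finset.range (m + 1), ε k ^ q / t k ^ q < 0)) :
    optErr q (WT q t) (infoCoord n ε) =
      recErr q (WT q t) (infoCoord n ε) (PhiStar q t n m) ∧
    recErr q (WT q t) (infoCoord n ε) (PhiStar q t n m) =
      ENNReal.ofReal
        ((t m ^ q + ∑ k ∈ Finset.range m, (1 - t m ^ q / t k ^ q) * ε k ^ q) ^ (1 / q)) := by
  obtain ⟨hpos, rfl⟩ | ⟨hmn, h1, h2⟩ := hm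
  · exact main_combined m q hq t htpos htmono ε hε m le_rfl (by linarith)
      (fun h => absurd h (lt_irrefl m))
  · refine main_combined n q hq t htpos htmono ε hε m hmn (by linarith) (fun _ => ?_)
    rw [Finset.sum_range_succ] at h2
    linarith
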